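/- arXiv:1407.5711 — 3 statements merged into one kernel-verified Lean document; each statement's English description precedes it below -/
import Mathlib

section
/- Let B = [B₁, …, B_N] be a matrix of N blocks, each B_n ∈ ℂ^{m×d}, with sub-coherence ν and block-coherence μ_B. Then for any set of K block indices S and the corresponding submatrix B_S ∈ ℂ^{m×Kd}, every eigenvalue λ of B_Sᴴ B_S satisfies |λ − 1| ≤ (d−1)ν + (K−1)d·μ_B, where each column of B has unit ℓ₂ norm. -/
open Matrix Finset

/-- Spectral norm (largest singular value) of a complex matrix. -/
noncomputable def specNorm {α β : Type*} [Fintype α] [Fintype β] [DecidableEq β]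
    (A : Matrix α β ℂ) : ℝ :=
  ‖(Matrix.toEuclideanLin A).toContinuousLinearMap‖

/-- Euclidean norm of a complex vector. -/
noncomputable def vnorm {α : Type*} [Fintype α] (v : α → ℂ) : ℝ :=
  Real.sqrt (∑ i, Complex.normSq (v i))

/-- The `n`-th block (of `d` consecutive columns) of a block matrix. -/
def blk {m N d : ℕ} (B : Matrix (Fin m) (Fin N × Fin d) ℂ) (n : Fin N) :
    Matrix (Fin m) (Fin d) ℂ := Matrix.of fun r c => B r (n, c)

/-- Submatrix obtained by concatenating the blocks indexed by `S`. -/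
def subMat {m N d K : ℕ} (B : Matrix (Fin m) (Fin N × Fin d) ℂ) (S : Fin K → Fin N) :
    Matrix (Fin m) (Fin K × Fin d) ℂ := Matrix.of fun r c => B r (S c.1, c.2)

lemma aux_chebyshev {p : ℕ} (a : Fin p → ℝ) :
    ∑ i, ∑ j ∈ (univ.erase i), a i * a j ≤ ((p:ℝ) - 1) * ∑ i, a i ^ 2 := by
  have h1 : ∑ i, ∑ j ∈ (univ.erase i), a i * a j = (∑ i, a i)^2 - ∑ i, a i^2 := by
    have h : ∀ i : Fin p, ∑ j ∈ (univ.erase i), a i * a j = a i * (∑ j, a j) - a i ^2 := by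
      intro i
      rw [← Finset.mul_sum, Finset.sum_erase_eq_sub (mem_univ i)]
      ring
    simp_rw [h, Finset.sum_sub_distrib, ← Finset.sum_mul, sq]
  have h2 : (∑ i, a i)^2 ≤ (p:ℝ) * ∑ i, a i^2 := by
    simpa using sq_sum_le_card_mul_sum_sq (s := univ) (f := a)
  nlinarith [h2]

/-- Gershgorin-type bound — every eigenvalue `λ` of the Gram
matrix `B_Sᴴ B_S` of a `K`-block submatrix of a unit-column-norm block matrix
with sub-coherence `ν` and block-coherence `μB` satisfies
`|λ − 1| ≤ (d−1)ν + (K−1)d·μB`. -/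
theorem gram_eigenvalue_bound
    (m N d K : ℕ) (B : Matrix (Fin m) (Fin N × Fin d) ℂ) (ν μB : ℝ)
    (hcol : ∀ j, ∑ r, Complex.normSq (B r j) = 1)
    (hν : ∀ n : Fin N, ∀ i j : Fin d, i ≠ j → ‖((blk B n)ᴴ * blk B n) i j‖ ≤ ν)
    (hμ : ∀ n n' : Fin N, n ≠ n' → specNorm ((blk B n)ᴴ * blk B n') ≤ d * μB)
    (S : Fin K → Fin N) (hS : Function.Injective S)
    (hG : ((subMat B S)ᴴ * subMat B S).IsHermitian) :
    ∀ k, |hG.eigenvalues k - 1| ≤ ((d : ℝ) - 1) * ν + ((K : ℝ) - 1) * d * μB := by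
  intro k
  have hd1 : 1 ≤ d := by
    rcases Nat.eq_zero_or_pos d with h | h
    · exact ((Fin.cast h k.2).elim0)
    · exact h
  have hK1 : 1 ≤ K := by
    rcases Nat.eq_zero_or_pos K with h | h
    · exact ((Fin.cast h k.1).elim0)
    · exact h
  set G := (subMat B S)ᴴ * subMat B S with hGdef
  set lam := hG.eigenvalues k with hlam
  set v : EuclideanSpace ℂ (Fin K × Fin d) := hG.eigenvectorBasis k with hv
  have hunit : ‖v‖ = 1 := hG.eigenvectorBasis.orthonormal.1 k
  have hev : G *ᵥ ⇑v = lam • ⇑v := hG.mulVec_eigenvectorBasis k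
  set a : Fin K × Fin d → ℝ := fun p => ‖v p‖ with ha
  have hsq : ∑ p, a p ^ 2 = 1 := by
    have h := hunit
    rw [EuclideanSpace.norm_eq] at h
    exact Real.sqrt_eq_one.mp h
  -- diagonal entries of G are 1
  have hdiag : ∀ p, G p p = 1 := by
    intro p
    have : G p p = ((∑ r, Complex.normSq (B r (S p.1, p.2)) : ℝ) : ℂ) := by
      simp [hGdef, Matrix.mul_apply, conjTranspose_apply, subMat, Complex.normSq_eq_conj_mul_self]
    rw [this, hcol]
    norm_num
  set c : (Fin K × Fin d) → (Fin K × Fin d) → ℂ :=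
    fun p q => (starRingEnd ℂ) (v p) * (G p q * v q) with hc
  have hvv : ∑ p, (starRingEnd ℂ) (v p) * v p = 1 := by
    have h : ∀ p : Fin K × Fin d, (starRingEnd ℂ) (v p) * v p = ((a p ^2 : ℝ) : ℂ) := by
      intro p
      rw [← Complex.normSq_eq_conj_mul_self, Complex.normSq_eq_norm_sq]
    simp_rw [h]
    rw [← Complex.ofReal_sum, hsq, Complex.ofReal_one]
  have h1 : ∑ p, ∑ q, c p q = (lam : ℂ) := by
    have step : ∀ p, ∑ q, c p q = (lam : ℂ) * ((starRingEnd ℂ) (v p) * v p) := by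
      intro p
      have e : ∑ q, c p q = (starRingEnd ℂ) (v p) * ((G *ᵥ ⇑v) p) := by
        simp only [hc, Matrix.mulVec, dotProduct, Finset.mul_sum]
      rw [e, hev]
      simp only [Pi.smul_apply, Complex.real_smul]
      ring
    simp_rw [step, ← Finset.mul_sum, hvv, mul_one]
  have h2 : ∑ p, c p p = 1 := by
    have : ∀ p : Fin K × Fin d, c p p = (starRingEnd ℂ) (v p) * v p := by
      intro p
      show (starRingEnd ℂ) (v p) * (G p p * v p) = _
      rw [hdiag p]; ring
    simp_rw [this]; exact hvv
  -- block decomposition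
  have hsplit : (lam : ℂ) - 1 =
      (∑ n, ∑ i, ∑ j ∈ univ.erase i, c (n,i) (n,j))
      + ∑ n, ∑ n' ∈ univ.erase n, ∑ i, ∑ j, c (n,i) (n',j) := by
    have e1 : (lam : ℂ) = ∑ n, ∑ n', ∑ i, ∑ j, c (n,i) (n',j) := by
      rw [← h1, Fintype.sum_prod_type]
      simp_rw [Fintype.sum_prod_type]
      exact Finset.sum_congr rfl fun n _ => Finset.sum_comm
    have e2 : (1 : ℂ) = ∑ n, ∑ i, c (n,i) (n,i) := by
      rw [← h2, Fintype.sum_prod_type]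
    rw [e1, e2, ← Finset.sum_sub_distrib, ← Finset.sum_add_distrib]
    refine Finset.sum_congr rfl fun n _ => ?_
    have hdn : (∑ i, ∑ j, c (n,i) (n,j)) - ∑ i, c (n,i) (n,i)
        = ∑ i, ∑ j ∈ univ.erase i, c (n,i) (n,j) := by
      rw [← Finset.sum_sub_distrib]
      refine Finset.sum_congr rfl fun i _ => ?_
      rw [← Finset.sum_erase_add univ _ (mem_univ i)]
      ring
    rw [← Finset.sum_erase_add univ _ (mem_univ n), add_sub_assoc, hdn, add_comm]
  set x : Fin K → EuclideanSpace ℂ (Fin d) := fun n => WithLp.toLp 2 (fun i => v (n, i)) with hx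
  set w : Fin K → ℝ := fun n => ‖x n‖ with hw
  have hGeq : ∀ (n n' : Fin K) (i j : Fin d),
      G (n,i) (n',j) = ((blk B (S n))ᴴ * blk B (S n')) i j := by
    intro n n' i j
    simp [hGdef, Matrix.mul_apply, conjTranspose_apply, subMat, blk]
  have hterm1 : ∀ (n : Fin K) (i j : Fin d), j ≠ i →
      ‖c (n,i) (n,j)‖ ≤ ν * (a (n,i) * a (n,j)) := by
    intro n i j hji
    have hb : ‖G (n,i) (n,j)‖ ≤ ν := by
      rw [hGeq]; exact hν (S n) i j (Ne.symm hji)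
    calc ‖c (n,i) (n,j)‖ = ‖G (n,i) (n,j)‖ * (a (n,i) * a (n,j)) := by
          show ‖(starRingEnd ℂ) (v (n,i)) * (G (n,i) (n,j) * v (n,j))‖ = _
          rw [norm_mul, norm_mul, RCLike.norm_conj]
          ring
      _ ≤ ν * (a (n,i) * a (n,j)) :=
          mul_le_mul_of_nonneg_right hb (by positivity)
  have hterm2 : ∀ n n' : Fin K, n' ≠ n →
      ‖∑ i, ∑ j, c (n,i) (n',j)‖ ≤ ((d:ℝ) * μB) * (w n * w n') := by
    intro n n' hne
    set M := (blk B (S n))ᴴ * blk B (S n') with hM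
    set L := (Matrix.toEuclideanLin M).toContinuousLinearMap with hL
    have hinner : @inner ℂ _ _ (x n) (L (x n')) = ∑ i, ∑ j, c (n,i) (n',j) := by
      rw [PiLp.inner_apply]
      refine Finset.sum_congr rfl fun i _ => ?_
      have hLi : L (x n') i = ∑ j, M i j * (x n') j := rfl
      rw [RCLike.inner_apply, hLi, mul_comm, Finset.mul_sum]
      refine Finset.sum_congr rfl fun j _ => ?_
      show (starRingEnd ℂ) (v (n,i)) * (M i j * v (n',j))
          = (starRingEnd ℂ) (v (n,i)) * (G (n,i) (n',j) * v (n',j))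
      rw [hGeq n n' i j, ← hM]
    calc ‖∑ i, ∑ j, c (n,i) (n',j)‖ = ‖@inner ℂ _ _ (x n) (L (x n'))‖ := by rw [hinner]
      _ ≤ ‖x n‖ * ‖L (x n')‖ := norm_inner_le_norm _ _
      _ ≤ ‖x n‖ * (‖L‖ * ‖x n'‖) :=
          mul_le_mul_of_nonneg_left (L.le_opNorm (x n')) (norm_nonneg _)
      _ ≤ ((d:ℝ) * μB) * (w n * w n') := by
          have hμ' : ‖L‖ ≤ (d:ℝ) * μB := hμ (S n) (S n') (fun h => hne (hS h).symm)
          have he : ‖x n‖ * (‖L‖ * ‖x n'‖) = ‖L‖ * (w n * w n') := by ring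
          rw [he]
          exact mul_le_mul_of_nonneg_right hμ' (by positivity)
  have hD : ‖∑ n, ∑ i, ∑ j ∈ univ.erase i, c (n,i) (n,j)‖
      ≤ ∑ n, ∑ i, ∑ j ∈ univ.erase i, ν * (a (n,i) * a (n,j)) := by
    refine (norm_sum_le _ _).trans (Finset.sum_le_sum fun n _ => ?_)
    refine (norm_sum_le _ _).trans (Finset.sum_le_sum fun i _ => ?_)
    refine (norm_sum_le _ _).trans (Finset.sum_le_sum fun j hj => ?_)
    exact hterm1 n i j (Finset.ne_of_mem_erase hj)
  have hOFF : ‖∑ n, ∑ n' ∈ univ.erase n, ∑ i, ∑ j, c (n,i) (n',j)‖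
      ≤ ∑ n, ∑ n' ∈ univ.erase n, ((d:ℝ) * μB) * (w n * w n') := by
    refine (norm_sum_le _ _).trans (Finset.sum_le_sum fun n _ => ?_)
    refine (norm_sum_le _ _).trans (Finset.sum_le_sum fun n' hn' => ?_)
    exact hterm2 n n' (Finset.ne_of_mem_erase hn')
  have hWsum : ∑ n, ∑ i, a (n,i)^2 = 1 := by
    exact (Fintype.sum_prod_type (f := fun p => a p ^ 2)).symm.trans hsq
  have hw2 : ∀ n, w n ^ 2 = ∑ i, a (n,i)^2 := by
    intro n
    show ‖x n‖ ^ 2 = _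
    rw [EuclideanSpace.norm_eq, Real.sq_sqrt (Finset.sum_nonneg fun i _ => sq_nonneg _)]
  have hwsum : ∑ n, w n ^ 2 = 1 := by simp_rw [hw2]; exact hWsum
  have hXX : ∑ n, ∑ i, ∑ j ∈ univ.erase i, ν * (a (n,i) * a (n,j)) ≤ ((d:ℝ)-1) * ν := by
    rcases Nat.lt_or_ge d 2 with hd | hd
    · have hd1' : d = 1 := by omega
      subst hd1'
      have hz : ∀ (n : Fin K) (i : Fin 1), ∑ j ∈ univ.erase i, ν * (a (n,i) * a (n,j)) = 0 := by
        intro n i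
        exact Finset.sum_eq_zero fun j hj =>
          absurd (Subsingleton.elim j i) (Finset.ne_of_mem_erase hj)
      simp [hz]
    · have hν0 : 0 ≤ ν := le_trans (norm_nonneg _)
        (hν (S k.1) ⟨0, by omega⟩ ⟨1, by omega⟩ (by simp [Fin.ext_iff]))
      have hXb : ∑ n, ∑ i, ∑ j ∈ univ.erase i, (a (n,i) * a (n,j)) ≤ (d:ℝ)-1 := by
        calc ∑ n, ∑ i, ∑ j ∈ univ.erase i, (a (n,i) * a (n,j))
            ≤ ∑ n, (((d:ℝ)-1) * ∑ i, a (n,i)^2) :=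
              Finset.sum_le_sum fun n _ => aux_chebyshev (fun i => a (n,i))
          _ = ((d:ℝ)-1) * ∑ n, ∑ i, a (n,i)^2 := by rw [← Finset.mul_sum]
          _ = (d:ℝ)-1 := by rw [hWsum, mul_one]
      calc ∑ n, ∑ i, ∑ j ∈ univ.erase i, ν * (a (n,i) * a (n,j))
          = ν * ∑ n, ∑ i, ∑ j ∈ univ.erase i, (a (n,i) * a (n,j)) := by
            simp_rw [Finset.mul_sum]
        _ ≤ ν * ((d:ℝ)-1) := mul_le_mul_of_nonneg_left hXb hν0
        _ = ((d:ℝ)-1) * ν := by ring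
  have hYY : ∑ n, ∑ n' ∈ univ.erase n, ((d:ℝ) * μB) * (w n * w n')
      ≤ ((K:ℝ)-1) * d * μB := by
    rcases Nat.lt_or_ge K 2 with hK | hK
    · have hK1' : K = 1 := by omega
      subst hK1'
      have hz : ∀ (n : Fin 1), ∑ n' ∈ univ.erase n, ((d:ℝ) * μB) * (w n * w n') = 0 := fun n =>
        Finset.sum_eq_zero fun n' hn' =>
          absurd (Subsingleton.elim n' n) (Finset.ne_of_mem_erase hn')
      simp [hz]
    · have hμ0 : 0 ≤ (d:ℝ) * μB := le_trans (norm_nonneg _)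
        (hμ (S ⟨0, by omega⟩) (S ⟨1, by omega⟩) (fun h => by
          have h2 := hS h; simp [Fin.ext_iff] at h2))
      have hYb : ∑ n, ∑ n' ∈ univ.erase n, (w n * w n') ≤ (K:ℝ)-1 := by
        calc ∑ n, ∑ n' ∈ univ.erase n, (w n * w n')
            ≤ ((K:ℝ)-1) * ∑ n, w n ^2 := aux_chebyshev w
          _ = (K:ℝ)-1 := by rw [hwsum, mul_one]
      calc ∑ n, ∑ n' ∈ univ.erase n, ((d:ℝ) * μB) * (w n * w n')
          = ((d:ℝ) * μB) * ∑ n, ∑ n' ∈ univ.erase n, (w n * w n') := by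
            simp_rw [Finset.mul_sum]
        _ ≤ ((d:ℝ) * μB) * ((K:ℝ)-1) := mul_le_mul_of_nonneg_left hYb hμ0
        _ = ((K:ℝ)-1) * d * μB := by ring
  have hnorm_eq : |lam - 1| = ‖(lam:ℂ) - 1‖ := by
    rw [show (lam:ℂ) - 1 = ((lam - 1 : ℝ) : ℂ) by push_cast; ring, Complex.norm_real,
      Real.norm_eq_abs]
  calc |lam - 1| = ‖(lam:ℂ) - 1‖ := hnorm_eq
    _ = ‖(∑ n, ∑ i, ∑ j ∈ univ.erase i, c (n,i) (n,j))
        + ∑ n, ∑ n' ∈ univ.erase n, ∑ i, ∑ j, c (n,i) (n',j)‖ := by rw [hsplit]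
    _ ≤ ‖∑ n, ∑ i, ∑ j ∈ univ.erase i, c (n,i) (n,j)‖
        + ‖∑ n, ∑ n' ∈ univ.erase n, ∑ i, ∑ j, c (n,i) (n',j)‖ := norm_add_le _ _
    _ ≤ (∑ n, ∑ i, ∑ j ∈ univ.erase i, ν * (a (n,i) * a (n,j)))
        + ∑ n, ∑ n' ∈ univ.erase n, ((d:ℝ) * μB) * (w n * w n') := add_le_add hD hOFF
    _ ≤ ((d:ℝ)-1) * ν + ((K:ℝ)-1) * d * μB := add_le_add hXX hYY
end

section
/- Under the assumptions of the previous Gram-matrix eigenvalue bound, if 1 − (d−1)ν − (K−1)d·μ_B > 0 then B_Sᴴ B_S is invertible and ‖(B_Sᴴ B_S)^{-1}‖ ≤ 1 / (1 − (d−1)ν − (K−1)d·μ_B), where ‖·‖ is the spectral norm. -/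
open Matrix Finset

lemma dot_bound {a b : ℕ} (M : Matrix (Fin a) (Fin b) ℂ) (u : Fin a → ℂ) (v : Fin b → ℂ) :
    ‖star u ⬝ᵥ (M *ᵥ v)‖ ≤ specNorm M * Real.sqrt (∑ i, Complex.normSq (u i)) *
      Real.sqrt (∑ j, Complex.normSq (v j)) := by
  set u' : EuclideanSpace ℂ (Fin a) := (WithLp.equiv 2 _).symm u
  set v' : EuclideanSpace ℂ (Fin b) := (WithLp.equiv 2 _).symm v
  have hinner : star u ⬝ᵥ (M *ᵥ v) = @inner ℂ _ _ u' ((Matrix.toEuclideanLin M).toContinuousLinearMap v') := by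
    rw [show (Matrix.toEuclideanLin M).toContinuousLinearMap v' = Matrix.toEuclideanLin M v' from rfl,
      Matrix.toEuclideanLin_apply]
    simp only [PiLp.inner_apply, RCLike.inner_apply', u', v', WithLp.equiv_symm_apply, WithLp.ofLp_toLp,
      WithLp.equiv_apply, dotProduct, Pi.star_apply, starRingEnd_apply, Equiv.apply_symm_apply]
  have h1 : ‖u'‖ = Real.sqrt (∑ i, Complex.normSq (u i)) := by
    rw [EuclideanSpace.norm_eq]
    congr 1
    refine Finset.sum_congr rfl fun i _ => ?_
    simp [u', Complex.sq_norm, ← Complex.normSq_eq_norm_sq]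
  have h2 : ‖v'‖ = Real.sqrt (∑ j, Complex.normSq (v j)) := by
    rw [EuclideanSpace.norm_eq]
    congr 1
    refine Finset.sum_congr rfl fun i _ => ?_
    simp [v', Complex.sq_norm, ← Complex.normSq_eq_norm_sq]
  rw [hinner, ← h1, ← h2]
  calc ‖@inner ℂ _ _ u' ((Matrix.toEuclideanLin M).toContinuousLinearMap v')‖
      ≤ ‖u'‖ * ‖(Matrix.toEuclideanLin M).toContinuousLinearMap v'‖ := norm_inner_le_norm _ _
    _ ≤ ‖u'‖ * (specNorm M * ‖v'‖) := by
        exact mul_le_mul_of_nonneg_left ((Matrix.toEuclideanLin M).toContinuousLinearMap.le_opNorm v') (norm_nonneg _)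
    _ = specNorm M * ‖u'‖ * ‖v'‖ := by ring

lemma pair_sum_le {n : ℕ} (a : Fin n → ℝ) :
    ∑ i, ∑ j ∈ univ.erase i, a i * a j ≤ ((n : ℝ) - 1) * ∑ i, a i ^ 2 := by
  have key : ∑ i, ∑ j ∈ univ.erase i, a i * a j = (∑ i, a i) ^ 2 - ∑ i, a i ^ 2 := by
    have h1 : (∑ i, a i) ^ 2 = ∑ i, ∑ j, a i * a j := by
      rw [sq, Finset.sum_mul_sum]
    have h2 : ∀ i : Fin n, ∑ j, a i * a j = a i ^ 2 + ∑ j ∈ univ.erase i, a i * a j := by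
      intro i
      rw [← Finset.add_sum_erase _ _ (mem_univ i), sq]
    rw [h1, Finset.sum_congr rfl fun i _ => h2 i, Finset.sum_add_distrib]
    ring
  have hcs : (∑ i, a i) ^ 2 ≤ (n : ℝ) * ∑ i, a i ^ 2 := by
    simpa using sq_sum_le_card_mul_sum_sq (s := (univ : Finset (Fin n))) (f := a)
  have hnn : 0 ≤ ∑ i, a i ^ 2 := Finset.sum_nonneg fun i _ => sq_nonneg _
  linarith

lemma clm_apply {ι κ : Type*} [Fintype ι] [Fintype κ] [DecidableEq κ]
    (A : Matrix ι κ ℂ) (y : EuclideanSpace ℂ κ) :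
    (Matrix.toEuclideanLin A).toContinuousLinearMap y
      = (WithLp.equiv 2 _).symm (A *ᵥ (WithLp.equiv 2 _ y)) := by
  rw [show (Matrix.toEuclideanLin A).toContinuousLinearMap y = Matrix.toEuclideanLin A y from rfl,
    Matrix.toEuclideanLin_apply]
  rfl

lemma inner_clm {ι : Type*} [Fintype ι] [DecidableEq ι]
    (A : Matrix ι ι ℂ) (y : EuclideanSpace ℂ ι) :
    @inner ℂ _ _ y ((Matrix.toEuclideanLin A).toContinuousLinearMap y)
      = star (WithLp.equiv 2 _ y) ⬝ᵥ (A *ᵥ (WithLp.equiv 2 _ y)) := by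
  rw [clm_apply]
  simp only [PiLp.inner_apply, RCLike.inner_apply', WithLp.equiv_symm_apply, WithLp.ofLp_toLp,
    WithLp.equiv_apply, dotProduct, Pi.star_apply, starRingEnd_apply]

lemma norm_sq_eq {ι : Type*} [Fintype ι] (y : EuclideanSpace ℂ ι) :
    ‖y‖ ^ 2 = ∑ i, Complex.normSq ((WithLp.equiv 2 _ y) i) := by
  rw [EuclideanSpace.norm_eq, Real.sq_sqrt (Finset.sum_nonneg fun i _ => sq_nonneg _)]
  exact Finset.sum_congr rfl fun i _ => by
    exact Complex.sq_norm _


lemma main_ineq (m N d K : ℕ) (B : Matrix (Fin m) (Fin N × Fin d) ℂ) (ν μB : ℝ)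
    (hcol : ∀ j, ∑ r, Complex.normSq (B r j) = 1)
    (hν : ∀ n : Fin N, ∀ i j : Fin d, i ≠ j → ‖((blk B n)ᴴ * blk B n) i j‖ ≤ ν)
    (hμ : ∀ n n' : Fin N, n ≠ n' → specNorm ((blk B n)ᴴ * blk B n') ≤ d * μB)
    (S : Fin K → Fin N) (hS : Function.Injective S) (x : Fin K × Fin d → ℂ) :
    (1 - ((d : ℝ) - 1) * ν - ((K : ℝ) - 1) * d * μB) * (∑ j, Complex.normSq (x j)) ≤
      (star x ⬝ᵥ (((subMat B S)ᴴ * subMat B S) *ᵥ x)).re := by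
  classical
  set G := (subMat B S)ᴴ * subMat B S with hGdef
  set M : Fin K → Fin K → Matrix (Fin d) (Fin d) ℂ :=
    fun k k' => (blk B (S k))ᴴ * blk B (S k') with hMdef
  have hGentry : ∀ p q : Fin K × Fin d, G p q = M p.1 q.1 p.2 q.2 := by
    intro p q
    simp [hGdef, hMdef, Matrix.mul_apply, subMat, blk, Matrix.conjTranspose_apply]
  have hdiag : ∀ p : Fin K × Fin d, G p p = 1 := by
    intro p
    have h1 : G p p = ((∑ r, Complex.normSq (B r (S p.1, p.2)) : ℝ) : ℂ) := by
      push_cast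
      simp [hGdef, Matrix.mul_apply, subMat, Matrix.conjTranspose_apply,
        Complex.normSq_eq_conj_mul_self]
    rw [h1, hcol]; norm_num
  set xk : Fin K → Fin d → ℂ := fun k i => x (k, i) with hxk
  set nk : Fin K → ℝ := fun k => Real.sqrt (∑ i, Complex.normSq (x (k, i))) with hnk
  have hnknn : ∀ k, 0 ≤ nk k := fun k => Real.sqrt_nonneg _
  have hnksq : ∀ k, nk k ^ 2 = ∑ i, Complex.normSq (x (k, i)) := fun k =>
    Real.sq_sqrt (Finset.sum_nonneg fun i _ => Complex.normSq_nonneg _)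
  have htot : ∑ j, Complex.normSq (x j) = ∑ k, ∑ i, Complex.normSq (x (k, i)) :=
    Fintype.sum_prod_type _
  -- expansion into blocks
  have expand : star x ⬝ᵥ (G *ᵥ x) = ∑ k, ∑ k', star (xk k) ⬝ᵥ (M k k' *ᵥ xk k') := by
    have h0 : star x ⬝ᵥ (G *ᵥ x) =
        ∑ p : Fin K × Fin d, ∑ q : Fin K × Fin d, star (x p) * (G p q * x q) := by
      simp [dotProduct, mulVec, Finset.mul_sum]
    rw [h0, Fintype.sum_prod_type]
    refine Finset.sum_congr rfl fun k _ => ?_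
    have h1 : ∀ i, ∑ q : Fin K × Fin d, star (x (k, i)) * (G (k, i) q * x q)
        = ∑ k', ∑ j, star (x (k, i)) * (G (k, i) (k', j) * x (k', j)) := fun i =>
      Fintype.sum_prod_type _
    rw [Finset.sum_congr rfl fun i _ => h1 i, Finset.sum_comm]
    refine Finset.sum_congr rfl fun k' _ => ?_
    simp only [dotProduct, mulVec, Finset.mul_sum, hxk, Pi.star_apply]
    refine Finset.sum_congr rfl fun i _ => Finset.sum_congr rfl fun j _ => ?_
    rw [hGentry (k, i) (k', j)]
  -- real part
  set T : Fin K → Fin K → ℝ := fun k k' => (star (xk k) ⬝ᵥ (M k k' *ᵥ xk k')).re with hT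
  have hre : (star x ⬝ᵥ (G *ᵥ x)).re = ∑ k, ∑ k', T k k' := by
    rw [expand]; rw [Complex.re_sum]
    exact Finset.sum_congr rfl fun k _ => Complex.re_sum _ _
  -- diagonal blocks
  have hdiagT : ∀ k, ∑ i, Complex.normSq (x (k, i))
      - ∑ i, ∑ j ∈ univ.erase i, ν * (‖x (k, i)‖ * ‖x (k, j)‖) ≤ T k k := by
    intro k
    have hTkk : T k k = ∑ i, ∑ j, (star (x (k, i)) * (M k k i j * x (k, j))).re := by
      simp only [hT, dotProduct, mulVec, Finset.mul_sum, hxk, Pi.star_apply]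
      rw [Complex.re_sum]
      exact Finset.sum_congr rfl fun i _ => Complex.re_sum _ _
    rw [hTkk, ← Finset.sum_sub_distrib]
    refine Finset.sum_le_sum fun i _ => ?_
    have hsplit : ∑ j, (star (x (k, i)) * (M k k i j * x (k, j))).re
        = (star (x (k, i)) * (M k k i i * x (k, i))).re
          + ∑ j ∈ univ.erase i, (star (x (k, i)) * (M k k i j * x (k, j))).re :=
      (Finset.add_sum_erase _ _ (mem_univ i)).symm
    have hMii : M k k i i = 1 := by rw [← hGentry (k, i) (k, i)]; exact hdiag (k, i)
    have hdiagterm : (star (x (k, i)) * (M k k i i * x (k, i))).re = Complex.normSq (x (k, i)) := by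
      rw [hMii, one_mul, Complex.star_def, mul_comm, Complex.mul_conj, Complex.ofReal_re]
    rw [hsplit, hdiagterm]
    have hoff : ∀ j ∈ univ.erase i,
        -(ν * (‖x (k, i)‖ * ‖x (k, j)‖)) ≤ (star (x (k, i)) * (M k k i j * x (k, j))).re := by
      intro j hj
      have hij : i ≠ j := (Finset.ne_of_mem_erase hj).symm
      have hb : ‖star (x (k, i)) * (M k k i j * x (k, j))‖ ≤ ν * (‖x (k, i)‖ * ‖x (k, j)‖) := by
        rw [norm_mul, norm_mul, norm_star]
        have := hν (S k) i j hij
        calc ‖x (k, i)‖ * (‖M k k i j‖ * ‖x (k, j)‖)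
            ≤ ‖x (k, i)‖ * (ν * ‖x (k, j)‖) := by
              refine mul_le_mul_of_nonneg_left (mul_le_mul_of_nonneg_right this (norm_nonneg _))
                (norm_nonneg _)
          _ = ν * (‖x (k, i)‖ * ‖x (k, j)‖) := by ring
      have := neg_abs_le ((star (x (k, i)) * (M k k i j * x (k, j))).re)
      have habs : |(star (x (k, i)) * (M k k i j * x (k, j))).re|
          ≤ ‖star (x (k, i)) * (M k k i j * x (k, j))‖ := Complex.abs_re_le_norm _
      linarith
    have := Finset.sum_le_sum hoff
    rw [Finset.sum_neg_distrib] at this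
    linarith
  -- off-diagonal blocks
  have hoffT : ∀ k, ∀ k' ∈ univ.erase k, -((d * μB) * (nk k * nk k')) ≤ T k k' := by
    intro k k' hk'
    have hkk' : k ≠ k' := (Finset.ne_of_mem_erase hk').symm
    have hSne : S k ≠ S k' := fun h => hkk' (hS h)
    have hb : ‖star (xk k) ⬝ᵥ (M k k' *ᵥ xk k')‖ ≤ (d * μB) * (nk k * nk k') := by
      have h1 := dot_bound (M k k') (xk k) (xk k')
      have h2 := hμ (S k) (S k') hSne
      have : specNorm (M k k') * nk k * nk k' ≤ (d * μB) * (nk k * nk k') := by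
        have := mul_le_mul_of_nonneg_right (mul_le_mul_of_nonneg_right h2 (hnknn k)) (hnknn k')
        nlinarith [hnknn k, hnknn k']
      exact le_trans h1 this
    have habs : |T k k'| ≤ ‖star (xk k) ⬝ᵥ (M k k' *ᵥ xk k')‖ := Complex.abs_re_le_norm _
    have := neg_abs_le (T k k')
    linarith
  -- sum splitting
  have hsum : ∑ k, (T k k + ∑ k' ∈ univ.erase k, T k k') = ∑ k, ∑ k', T k k' :=
    Finset.sum_congr rfl fun k _ => Finset.add_sum_erase _ _ (mem_univ k)
  -- bound for the ν part
  have hνpart : ∑ k, ∑ i, ∑ j ∈ univ.erase i, ν * (‖x (k, i)‖ * ‖x (k, j)‖)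
      ≤ ((d : ℝ) - 1) * ν * ∑ j, Complex.normSq (x j) := by
    by_cases hcase : 2 ≤ d ∧ 1 ≤ K
    · have hν0 : 0 ≤ ν := by
        have hne : (⟨0, by omega⟩ : Fin d) ≠ ⟨1, hcase.1⟩ := Fin.ne_of_val_ne (by norm_num)
        exact le_trans (norm_nonneg _) (hν (S ⟨0, hcase.2⟩) ⟨0, by omega⟩ ⟨1, hcase.1⟩ hne)
      calc ∑ k, ∑ i, ∑ j ∈ univ.erase i, ν * (‖x (k, i)‖ * ‖x (k, j)‖)
          = ν * ∑ k, ∑ i, ∑ j ∈ univ.erase i, ‖x (k, i)‖ * ‖x (k, j)‖ := by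
            rw [Finset.mul_sum]
            refine Finset.sum_congr rfl fun k _ => ?_
            rw [Finset.mul_sum]
            exact Finset.sum_congr rfl fun i _ => by rw [Finset.mul_sum]
        _ ≤ ν * (((d : ℝ) - 1) * ∑ j, Complex.normSq (x j)) := by
            refine mul_le_mul_of_nonneg_left ?_ hν0
            rw [htot, Finset.mul_sum]
            refine Finset.sum_le_sum fun k _ => ?_
            have := pair_sum_le (fun i => ‖x (k, i)‖)
            have heq : ∑ i, ‖x (k, i)‖ ^ 2 = ∑ i, Complex.normSq (x (k, i)) :=
              Finset.sum_congr rfl fun i _ => by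
                rw [← Complex.sq_norm]
            rw [heq] at this
            exact this
        _ = ((d : ℝ) - 1) * ν * ∑ j, Complex.normSq (x j) := by ring
    · push_neg at hcase
      by_cases hK : K = 0
      · subst hK; simp
      · have hd : d = 0 ∨ d = 1 := by
          rcases Nat.lt_or_ge d 2 with h | h
          · omega
          · exact absurd (hcase h) (by omega)
        rcases hd with h | h
        · subst h; simp
        · subst h
          have he : ∀ i : Fin 1, (univ.erase i : Finset (Fin 1)) = ∅ := by decide
          norm_num [he]
  -- bound for the μ part
  have hμpart : ∑ k, ∑ k' ∈ univ.erase k, ((d : ℝ) * μB) * (nk k * nk k')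
      ≤ ((K : ℝ) - 1) * d * μB * ∑ j, Complex.normSq (x j) := by
    by_cases hK2 : 2 ≤ K
    · have hμ0 : 0 ≤ (d : ℝ) * μB := by
        have hne : (⟨0, by omega⟩ : Fin K) ≠ ⟨1, by omega⟩ := Fin.ne_of_val_ne (by norm_num)
        have h2 := hμ (S ⟨0, by omega⟩) (S ⟨1, by omega⟩) (fun h => hne (hS h))
        exact le_trans (norm_nonneg _) h2
      have hnksum : ∑ k, nk k ^ 2 = ∑ j, Complex.normSq (x j) := by
        rw [htot]
        exact Finset.sum_congr rfl fun k _ => hnksq k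
      calc ∑ k, ∑ k' ∈ univ.erase k, ((d : ℝ) * μB) * (nk k * nk k')
          = ((d : ℝ) * μB) * ∑ k, ∑ k' ∈ univ.erase k, nk k * nk k' := by
            rw [Finset.mul_sum]
            exact Finset.sum_congr rfl fun k _ => by rw [Finset.mul_sum]
        _ ≤ ((d : ℝ) * μB) * (((K : ℝ) - 1) * ∑ k, nk k ^ 2) :=
            mul_le_mul_of_nonneg_left (pair_sum_le nk) hμ0
        _ = ((K : ℝ) - 1) * d * μB * ∑ j, Complex.normSq (x j) := by
            rw [hnksum]; ring
    · by_cases hK : K = 0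
      · subst hK; simp
      · have h1 : K = 1 := by omega
        subst h1
        have he : ∀ k : Fin 1, (univ.erase k : Finset (Fin 1)) = ∅ := by decide
        norm_num [he]
  -- lower bound for the quadratic form
  have hlow : ∑ j, Complex.normSq (x j)
      - (∑ k, ∑ i, ∑ j ∈ univ.erase i, ν * (‖x (k, i)‖ * ‖x (k, j)‖))
      - (∑ k, ∑ k' ∈ univ.erase k, ((d : ℝ) * μB) * (nk k * nk k'))
      ≤ ∑ k, ∑ k', T k k' := by
    rw [← hsum, htot, ← Finset.sum_sub_distrib, ← Finset.sum_sub_distrib]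
    refine Finset.sum_le_sum fun k _ => ?_
    have h1 := hdiagT k
    have h2 : -∑ k' ∈ univ.erase k, ((d : ℝ) * μB) * (nk k * nk k')
        ≤ ∑ k' ∈ univ.erase k, T k k' := by
      rw [← Finset.sum_neg_distrib]
      exact Finset.sum_le_sum (hoffT k)
    linarith
  rw [hre]
  linarith [hνpart, hμpart, hlow]

/-- if `1 − (d−1)ν − (K−1)d·μB > 0` then the Gram matrix
`B_Sᴴ B_S` is invertible and `‖(B_Sᴴ B_S)⁻¹‖ ≤ 1/(1 − (d−1)ν − (K−1)d·μB)`. -/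
theorem gram_invertible_and_inverse_bound
    (m N d K : ℕ) (B : Matrix (Fin m) (Fin N × Fin d) ℂ) (ν μB : ℝ)
    (hcol : ∀ j, ∑ r, Complex.normSq (B r j) = 1)
    (hν : ∀ n : Fin N, ∀ i j : Fin d, i ≠ j → ‖((blk B n)ᴴ * blk B n) i j‖ ≤ ν)
    (hμ : ∀ n n' : Fin N, n ≠ n' → specNorm ((blk B n)ᴴ * blk B n') ≤ d * μB)
    (S : Fin K → Fin N) (hS : Function.Injective S)
    (hc : 0 < 1 - ((d : ℝ) - 1) * ν - ((K : ℝ) - 1) * d * μB) :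
    IsUnit ((subMat B S)ᴴ * subMat B S) ∧
      specNorm ((subMat B S)ᴴ * subMat B S)⁻¹ ≤
        1 / (1 - ((d : ℝ) - 1) * ν - ((K : ℝ) - 1) * d * μB) := by
  set G := (subMat B S)ᴴ * subMat B S with hGdef
  set c := 1 - ((d : ℝ) - 1) * ν - ((K : ℝ) - 1) * d * μB with hcdef
  have hq : ∀ x : Fin K × Fin d → ℂ,
      c * (∑ j, Complex.normSq (x j)) ≤ (star x ⬝ᵥ (G *ᵥ x)).re := fun x =>
    main_ineq m N d K B ν μB hcol hν hμ S hS x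
  show IsUnit G ∧ specNorm G⁻¹ ≤ 1 / c

  set T := (Matrix.toEuclideanLin G).toContinuousLinearMap with hT
  have hlow : ∀ y : EuclideanSpace ℂ (Fin K × Fin d), c * ‖y‖ ≤ ‖T y‖ := by
    intro y
    have h1 : c * ‖y‖ ^ 2 ≤ (@inner ℂ _ _ y (T y)).re := by
      rw [norm_sq_eq, hT, inner_clm]
      exact hq _
    have h2 : (@inner ℂ _ _ y (T y)).re ≤ ‖y‖ * ‖T y‖ := by
      refine le_trans (Complex.re_le_norm _) ?_
      exact norm_inner_le_norm _ _
    rcases eq_or_ne y 0 with rfl | hy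
    · simp
    · have hypos : 0 < ‖y‖ := norm_pos_iff.mpr hy
      nlinarith
  have hinj : Function.Injective (G.mulVec) := by
    intro u v huv
    have h : ∀ w : Fin K × Fin d → ℂ, G *ᵥ w = 0 → w = 0 := by
      intro w hw
      have h1 := hlow ((WithLp.equiv 2 (Fin K × Fin d → ℂ)).symm w)
      have h2 : T ((WithLp.equiv 2 (Fin K × Fin d → ℂ)).symm w) = 0 := by
        rw [hT, clm_apply]
        simp [hw]
      rw [h2] at h1
      simp only [norm_zero] at h1
      have : ‖(WithLp.equiv 2 (Fin K × Fin d → ℂ)).symm w‖ = 0 := by nlinarith [norm_nonneg ((WithLp.equiv 2 (Fin K × Fin d → ℂ)).symm w)]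
      have hz := norm_eq_zero.mp this
      simpa using congrArg (WithLp.equiv 2 (Fin K × Fin d → ℂ)) hz
    have := h (u - v) (by rw [Matrix.mulVec_sub, huv, sub_self])
    exact sub_eq_zero.mp this
  have hU : IsUnit G := Matrix.mulVec_injective_iff_isUnit.mp hinj
  refine ⟨hU, ?_⟩
  have hdet := G.isUnit_iff_isUnit_det.mp hU
  have hGinv : G * G⁻¹ = 1 := Matrix.mul_nonsing_inv G hdet
  set T' := (Matrix.toEuclideanLin G⁻¹).toContinuousLinearMap with hT'
  show ‖T'‖ ≤ 1 / c
  refine ContinuousLinearMap.opNorm_le_bound _ (by positivity) fun y => ?_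
  have hkey : T (T' y) = y := by
    rw [hT, hT', clm_apply, clm_apply]
    simp only [Equiv.apply_symm_apply, Matrix.mulVec_mulVec, hGinv, Matrix.one_mulVec]
    exact (WithLp.equiv 2 (Fin K × Fin d → ℂ)).symm_apply_apply y
  have := hlow (T' y)
  rw [hkey] at this
  rw [one_div, inv_mul_eq_div, le_div_iff₀ hc, mul_comm]
  exact this
end

section
/- Let B ∈ ℂ^{m×Nd} be partitioned into blocks B₁,…,B_N of d columns, with unit-norm columns, sub-coherence ν, and block-coherence μ_B. For s supported on block set I, ‖B_iᴴ B s‖₂ ≥ [1 − (d−1)ν]·‖s_i‖₂ − (|I|−1)·d·μ_B·max_{k∈I}‖s_k‖₂ for any i ∈ I, and ‖B_jᴴ B s‖₂ ≤ |I|·d·μ_B·max_{k∈I}‖s_k‖₂ for any j ∉ I. -/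
open Matrix Finset

/- ---------- auxiliary lemmas ---------- -/

lemma vnorm_eq_norm {α : Type*} [Fintype α] (v : α → ℂ) :
    vnorm v = ‖(WithLp.equiv 2 (α → ℂ)).symm v‖ := by
  rw [vnorm, EuclideanSpace.norm_eq]
  congr 1
  refine Finset.sum_congr rfl fun i _ => ?_
  simp [Complex.normSq_eq_norm_sq]

lemma vnorm_def' {α : Type*} [Fintype α] (v : α → ℂ) :
    vnorm v = Real.sqrt (∑ i, ‖v i‖ ^ 2) := by
  rw [vnorm]
  congr 1
  refine Finset.sum_congr rfl fun i _ => ?_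
  simp [Complex.normSq_eq_norm_sq]

lemma vnorm_nonneg {α : Type*} [Fintype α] (v : α → ℂ) : 0 ≤ vnorm v :=
  Real.sqrt_nonneg _

lemma vnorm_mulVec_le {α β : Type*} [Fintype α] [Fintype β] [DecidableEq β]
    (A : Matrix α β ℂ) (x : β → ℂ) :
    vnorm (A.mulVec x) ≤ specNorm A * vnorm x := by
  rw [vnorm_eq_norm, vnorm_eq_norm]
  have h := (Matrix.toEuclideanLin A).toContinuousLinearMap.le_opNorm
    ((WithLp.equiv 2 (β → ℂ)).symm x)
  simpa [specNorm, Matrix.toEuclideanLin_apply_piLp_toLp] using h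

lemma vnorm_sum_le {α β : Type*} [Fintype α] (T : Finset β) (f : β → α → ℂ) :
    vnorm (∑ k ∈ T, f k) ≤ ∑ k ∈ T, vnorm (f k) := by
  rw [vnorm_eq_norm]
  have h : (WithLp.equiv 2 (α → ℂ)).symm (∑ k ∈ T, f k)
      = ∑ k ∈ T, (WithLp.equiv 2 (α → ℂ)).symm (f k) :=
    map_sum (WithLp.linearEquiv 2 ℂ (α → ℂ)).symm.toLinearMap f T
  rw [h]
  refine (norm_sum_le _ _).trans (le_of_eq ?_)
  exact Finset.sum_congr rfl fun k _ => (vnorm_eq_norm (f k)).symm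

lemma vnorm_add_ge {α : Type*} [Fintype α] (x y : α → ℂ) :
    vnorm x - vnorm y ≤ vnorm (x + y) := by
  simp only [vnorm_eq_norm]
  rw [show (WithLp.equiv 2 (α → ℂ)).symm (x + y) = (WithLp.equiv 2 (α → ℂ)).symm x + (WithLp.equiv 2 (α → ℂ)).symm y from rfl]
  have h := norm_sub_le ((WithLp.equiv 2 (α → ℂ)).symm x + (WithLp.equiv 2 (α → ℂ)).symm y)
    ((WithLp.equiv 2 (α → ℂ)).symm y)
  simp only [add_sub_cancel_right] at h
  linarith

/-- A square matrix with zero diagonal and off-diagonal entries of norm at most `ν`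
has `‖E x‖ ≤ (d-1) ν ‖x‖`. -/
lemma offdiag_mulVec_le (d : ℕ) (E : Matrix (Fin d) (Fin d) ℂ) (ν : ℝ)
    (hdiag : ∀ i, E i i = 0) (hoff : ∀ i j : Fin d, i ≠ j → ‖E i j‖ ≤ ν)
    (x : Fin d → ℂ) :
    vnorm (E.mulVec x) ≤ ((d : ℝ) - 1) * ν * vnorm x := by
  rcases Nat.lt_or_ge d 2 with hd | hd
  · interval_cases d
    · simp [vnorm]
    · have hE : E.mulVec x = 0 := by
        funext i
        have h0 : E i i = 0 := hdiag i
        simp [Matrix.mulVec, dotProduct, Subsingleton.elim (0 : Fin 1) i, h0]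
      rw [hE]
      have : ((1 : ℕ) : ℝ) - 1 = 0 := by norm_num
      simp [vnorm, this]
  · have hν0 : 0 ≤ ν :=
      le_trans (norm_nonneg _) (hoff ⟨0, by omega⟩ ⟨1, by omega⟩ (by simp [Fin.ext_iff]))
    have hd1 : (0 : ℝ) ≤ (d : ℝ) - 1 := by
      have : (2 : ℝ) ≤ (d : ℝ) := by exact_mod_cast hd
      linarith
    set T : ℝ := ∑ j, ‖x j‖ ^ 2 with hT
    have hrow : ∀ i : Fin d, ‖(E.mulVec x) i‖ ≤ ν * ∑ j ∈ univ.erase i, ‖x j‖ := by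
      intro i
      have h1 : ‖(E.mulVec x) i‖ ≤ ∑ j, ‖E i j * x j‖ := by
        simp only [Matrix.mulVec, dotProduct]
        exact norm_sum_le _ _
      have h2 : ∑ j, ‖E i j * x j‖ = ∑ j ∈ univ.erase i, ‖E i j * x j‖ := by
        rw [Finset.sum_erase_eq_sub (mem_univ i)]
        simp [hdiag i]
      have h3 : ∑ j ∈ univ.erase i, ‖E i j * x j‖ ≤ ∑ j ∈ univ.erase i, ν * ‖x j‖ := by
        refine Finset.sum_le_sum fun j hj => ?_
        rw [norm_mul]
        exact mul_le_mul_of_nonneg_right (hoff i j (fun h => (mem_erase.1 hj).1 h.symm))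
          (norm_nonneg _)
      calc ‖(E.mulVec x) i‖ ≤ ∑ j ∈ univ.erase i, ‖E i j * x j‖ := by rw [← h2]; exact h1
        _ ≤ ∑ j ∈ univ.erase i, ν * ‖x j‖ := h3
        _ = ν * ∑ j ∈ univ.erase i, ‖x j‖ := by rw [Finset.mul_sum]
    have key : ∑ i, ‖(E.mulVec x) i‖ ^ 2 ≤ (((d : ℝ) - 1) * ν) ^ 2 * T := by
      have step1 : ∑ i, ‖(E.mulVec x) i‖ ^ 2
          ≤ ∑ i, (ν * ∑ j ∈ univ.erase i, ‖x j‖) ^ 2 := by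
        refine Finset.sum_le_sum fun i _ => ?_
        exact pow_le_pow_left₀ (norm_nonneg _) (hrow i) 2
      have step2 : ∀ i : Fin d, (ν * ∑ j ∈ univ.erase i, ‖x j‖) ^ 2
          ≤ ν ^ 2 * (((d : ℝ) - 1) * (T - ‖x i‖ ^ 2)) := by
        intro i
        rw [mul_pow]
        refine mul_le_mul_of_nonneg_left ?_ (sq_nonneg ν)
        have hcs : (∑ j ∈ univ.erase i, ‖x j‖) ^ 2
            ≤ ((univ.erase i).card : ℝ) * ∑ j ∈ univ.erase i, ‖x j‖ ^ 2 :=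
          sq_sum_le_card_mul_sum_sq
        have hcard : ((univ.erase i).card : ℝ) = (d : ℝ) - 1 := by
          rw [Finset.card_erase_of_mem (mem_univ i), card_univ, Fintype.card_fin]
          have : 1 ≤ d := by omega
          push_cast [Nat.cast_sub this]
          ring
        have hsub : ∑ j ∈ univ.erase i, ‖x j‖ ^ 2 = T - ‖x i‖ ^ 2 := by
          rw [Finset.sum_erase_eq_sub (mem_univ i)]
        rw [hcard, hsub] at hcs
        exact hcs
      have step3 : ∑ i, (ν * ∑ j ∈ univ.erase i, ‖x j‖) ^ 2
          ≤ ∑ i : Fin d, ν ^ 2 * (((d : ℝ) - 1) * (T - ‖x i‖ ^ 2)) :=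
        Finset.sum_le_sum fun i _ => step2 i
      have step4 : ∑ i : Fin d, ν ^ 2 * (((d : ℝ) - 1) * (T - ‖x i‖ ^ 2))
          = (((d : ℝ) - 1) * ν) ^ 2 * T := by
        have hsum : ∑ i : Fin d, (T - ‖x i‖ ^ 2) = (d : ℝ) * T - T := by
          rw [Finset.sum_sub_distrib, Finset.sum_const, card_univ, Fintype.card_fin,
            nsmul_eq_mul, ← hT]
        rw [← Finset.mul_sum, ← Finset.mul_sum, hsum]
        ring
      calc ∑ i, ‖(E.mulVec x) i‖ ^ 2
          ≤ ∑ i, (ν * ∑ j ∈ univ.erase i, ‖x j‖) ^ 2 := step1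
        _ ≤ ∑ i : Fin d, ν ^ 2 * (((d : ℝ) - 1) * (T - ‖x i‖ ^ 2)) := step3
        _ = (((d : ℝ) - 1) * ν) ^ 2 * T := step4
    rw [vnorm_def', vnorm_def', ← hT]
    calc Real.sqrt (∑ i, ‖(E.mulVec x) i‖ ^ 2)
        ≤ Real.sqrt ((((d : ℝ) - 1) * ν) ^ 2 * T) := Real.sqrt_le_sqrt key
      _ = ((d : ℝ) - 1) * ν * Real.sqrt T := by
          rw [Real.sqrt_mul (sq_nonneg _), Real.sqrt_sq (by positivity)]

/- ---------- main theorem ---------- -/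

/-- correlation bounds for blocks inside and outside the support:
for `i ∈ I`, `‖B_iᴴ B s‖₂ ≥ [1−(d−1)ν]‖s_i‖₂ − (|I|−1)dμ_B·max_{k∈I}‖s_k‖₂`,
and for `j ∉ I`, `‖B_jᴴ B s‖₂ ≤ |I|dμ_B·max_{k∈I}‖s_k‖₂`
(stated with `su` any upper bound of the block norms `‖s_k‖₂`, `k ∈ I`). -/
theorem block_correlation_bounds
    (m N d : ℕ) (B : Matrix (Fin m) (Fin N × Fin d) ℂ) (ν μB su : ℝ)
    (hcol : ∀ j, ∑ r, Complex.normSq (B r j) = 1)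
    (hν : ∀ n : Fin N, ∀ i j : Fin d, i ≠ j → ‖((blk B n)ᴴ * blk B n) i j‖ ≤ ν)
    (hμ : ∀ n n' : Fin N, n ≠ n' → specNorm ((blk B n)ᴴ * blk B n') ≤ d * μB)
    (I : Finset (Fin N)) (s : Fin N × Fin d → ℂ)
    (hsupp : ∀ p : Fin N × Fin d, p.1 ∉ I → s p = 0)
    (hsu : ∀ n ∈ I, vnorm (fun c => s (n, c)) ≤ su) :
    (∀ i ∈ I,
      (1 - ((d : ℝ) - 1) * ν) * vnorm (fun c => s (i, c)) -
          ((I.card : ℝ) - 1) * d * μB * su ≤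
        vnorm ((blk B i)ᴴ.mulVec (B.mulVec s))) ∧
    (∀ j ∉ I,
      vnorm ((blk B j)ᴴ.mulVec (B.mulVec s)) ≤ (I.card : ℝ) * d * μB * su) := by
  set sk : Fin N → Fin d → ℂ := fun k c => s (k, c) with hsk
  -- decomposition of the correlation vector into block contributions
  have hdecomp : ∀ n : Fin N,
      (blk B n)ᴴ.mulVec (B.mulVec s)
        = ∑ k ∈ I, ((blk B n)ᴴ * blk B k).mulVec (sk k) := by
    intro n
    have hBs : B.mulVec s = ∑ k ∈ I, (blk B k).mulVec (sk k) := by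
      funext r
      rw [Finset.sum_apply]
      simp only [Matrix.mulVec, dotProduct, blk, Matrix.of_apply, hsk]
      rw [Fintype.sum_prod_type]
      symm
      apply Finset.sum_subset (Finset.subset_univ I)
      intro k _ hk
      exact Finset.sum_eq_zero fun c _ => by rw [hsupp (k, c) hk, mul_zero]
    rw [hBs]
    have hmap : (blk B n)ᴴ.mulVec (∑ k ∈ I, (blk B k).mulVec (sk k))
        = ∑ k ∈ I, (blk B n)ᴴ.mulVec ((blk B k).mulVec (sk k)) :=
      map_sum ((blk B n)ᴴ.mulVecLin) (fun k => (blk B k).mulVec (sk k)) I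
    rw [hmap]
    exact Finset.sum_congr rfl fun k _ => Matrix.mulVec_mulVec _ _ _
  -- Gram diagonal blocks have unit diagonal
  have hGdiag : ∀ (n : Fin N) (c : Fin d), ((blk B n)ᴴ * blk B n) c c = 1 := by
    intro n c
    have : ((blk B n)ᴴ * blk B n) c c
        = ∑ r, ((Complex.normSq (B r (n, c)) : ℝ) : ℂ) := by
      simp only [Matrix.mul_apply, Matrix.conjTranspose_apply, blk, Matrix.of_apply]
      exact Finset.sum_congr rfl fun r _ => (Complex.normSq_eq_conj_mul_self).symm
    rw [this, ← Complex.ofReal_sum, hcol (n, c), Complex.ofReal_one]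
  constructor
  · -- lower bound for i ∈ I
    intro i hi
    rw [hdecomp i]
    have hsplit : ∑ k ∈ I, ((blk B i)ᴴ * blk B k).mulVec (sk k)
        = ((blk B i)ᴴ * blk B i).mulVec (sk i)
          + ∑ k ∈ I.erase i, ((blk B i)ᴴ * blk B k).mulVec (sk k) :=
      (Finset.add_sum_erase I _ hi).symm
    rw [hsplit]
    -- bound the cross terms
    have hcross : vnorm (∑ k ∈ I.erase i, ((blk B i)ᴴ * blk B k).mulVec (sk k))
        ≤ ((I.card : ℝ) - 1) * ((d : ℝ) * μB * su) := by
      refine (vnorm_sum_le _ _).trans ?_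
      have hterm : ∀ k ∈ I.erase i,
          vnorm (((blk B i)ᴴ * blk B k).mulVec (sk k)) ≤ (d : ℝ) * μB * su := by
        intro k hk
        obtain ⟨hki, hkI⟩ := mem_erase.1 hk
        have h1 : vnorm (((blk B i)ᴴ * blk B k).mulVec (sk k))
            ≤ specNorm ((blk B i)ᴴ * blk B k) * vnorm (sk k) := vnorm_mulVec_le _ _
        have h2 : specNorm ((blk B i)ᴴ * blk B k) ≤ (d : ℝ) * μB :=
          hμ i k (fun h => hki h.symm)
        have hdμ : 0 ≤ (d : ℝ) * μB := le_trans (norm_nonneg _) h2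
        calc vnorm (((blk B i)ᴴ * blk B k).mulVec (sk k))
            ≤ specNorm ((blk B i)ᴴ * blk B k) * vnorm (sk k) := h1
          _ ≤ ((d : ℝ) * μB) * vnorm (sk k) :=
              mul_le_mul_of_nonneg_right h2 (vnorm_nonneg _)
          _ ≤ ((d : ℝ) * μB) * su := mul_le_mul_of_nonneg_left (hsu k hkI) hdμ
          _ = (d : ℝ) * μB * su := by ring
      refine (Finset.sum_le_sum hterm).trans (le_of_eq ?_)
      rw [Finset.sum_const, nsmul_eq_mul, Finset.card_erase_of_mem hi]
      have h1 : 1 ≤ I.card := Finset.card_pos.2 ⟨i, hi⟩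
      push_cast [Nat.cast_sub h1]
      ring
    -- lower bound for the diagonal term
    have hdiagterm : (1 - ((d : ℝ) - 1) * ν) * vnorm (sk i)
        ≤ vnorm (((blk B i)ᴴ * blk B i).mulVec (sk i)) := by
      set G := (blk B i)ᴴ * blk B i with hG
      set E := G - 1 with hE
      have hGx : G.mulVec (sk i) = sk i + E.mulVec (sk i) := by
        rw [hE, Matrix.sub_mulVec, Matrix.one_mulVec]
        abel
      have hEdiag : ∀ c, E c c = 0 := by
        intro c
        have h1 : G c c = 1 := hGdiag i c
        simp [hE, Matrix.sub_apply, Matrix.one_apply_eq, h1]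
      have hEoff : ∀ c c' : Fin d, c ≠ c' → ‖E c c'‖ ≤ ν := by
        intro c c' hcc
        have : E c c' = G c c' := by
          simp [hE, Matrix.sub_apply, Matrix.one_apply_ne hcc]
        rw [this]
        exact hν i c c' hcc
      have hEb : vnorm (E.mulVec (sk i)) ≤ ((d : ℝ) - 1) * ν * vnorm (sk i) :=
        offdiag_mulVec_le d E ν hEdiag hEoff (sk i)
      have htri : vnorm (sk i) - vnorm (E.mulVec (sk i)) ≤ vnorm (G.mulVec (sk i)) := by
        rw [hGx]
        exact vnorm_add_ge _ _
      nlinarith [vnorm_nonneg (sk i), vnorm_nonneg (E.mulVec (sk i))]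
    have htri2 := vnorm_add_ge (((blk B i)ᴴ * blk B i).mulVec (sk i))
      (∑ k ∈ I.erase i, ((blk B i)ᴴ * blk B k).mulVec (sk k))
    have hskieq : vnorm (fun c => s (i, c)) = vnorm (sk i) := rfl
    rw [hskieq]
    have : ((I.card : ℝ) - 1) * d * μB * su = ((I.card : ℝ) - 1) * ((d : ℝ) * μB * su) := by
      ring
    rw [this]
    linarith
  · -- upper bound for j ∉ I
    intro j hj
    rw [hdecomp j]
    refine (vnorm_sum_le _ _).trans ?_
    have hterm : ∀ k ∈ I,
        vnorm (((blk B j)ᴴ * blk B k).mulVec (sk k)) ≤ (d : ℝ) * μB * su := by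
      intro k hkI
      have hjk : j ≠ k := fun h => hj (h ▸ hkI)
      have h1 : vnorm (((blk B j)ᴴ * blk B k).mulVec (sk k))
          ≤ specNorm ((blk B j)ᴴ * blk B k) * vnorm (sk k) := vnorm_mulVec_le _ _
      have h2 : specNorm ((blk B j)ᴴ * blk B k) ≤ (d : ℝ) * μB := hμ j k hjk
      have hdμ : 0 ≤ (d : ℝ) * μB := le_trans (norm_nonneg _) h2
      calc vnorm (((blk B j)ᴴ * blk B k).mulVec (sk k))
          ≤ specNorm ((blk B j)ᴴ * blk B k) * vnorm (sk k) := h1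
        _ ≤ ((d : ℝ) * μB) * vnorm (sk k) :=
            mul_le_mul_of_nonneg_right h2 (vnorm_nonneg _)
        _ ≤ ((d : ℝ) * μB) * su := mul_le_mul_of_nonneg_left (hsu k hkI) hdμ
        _ = (d : ℝ) * μB * su := by ring
    refine (Finset.sum_le_sum hterm).trans (le_of_eq ?_)
    rw [Finset.sum_const, nsmul_eq_mul]
    ring
end
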